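/- arXiv:1605.07856 — 2 statements merged into one kernel-verified Lean document; each statement's English description precedes it below -/
import Mathlib

section
/- Let Π > 2 be a square-free integer and let p range over the prime divisors of Π. Then the sum of (log p)/p over all primes p dividing Π is at most log log Π + 2. -/
open Real Finset



lemma log_le_of_pow_le {x : ℝ} {k m : ℕ} (hx : 0 < x) (hk : 0 < k)
    (h : x ^ k ≤ Real.exp m) : Real.log x ≤ (m : ℝ) / k := by
  have h1 : Real.log (x ^ k) ≤ (m : ℝ) :=
    (Real.log_le_iff_le_exp (by positivity)).2 h
  rw [Real.log_pow] at h1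
  rw [le_div_iff₀ (by exact_mod_cast hk)]
  push_cast at h1 ⊢
  linarith

lemma exp_ge (n : ℕ) : (2.7182818283 : ℝ) ^ n ≤ Real.exp n := by
  rw [← Real.exp_one_pow]
  exact pow_le_pow_left₀ (by norm_num) Real.exp_one_gt_d9.le n

lemma log2_le : Real.log 2 ≤ 3/4 := by
  have := log_le_of_pow_le (x := 2) (k := 4) (m := 3) (by norm_num) (by norm_num)
    (le_trans (by norm_num) (exp_ge 3))
  norm_num at this; linarith

lemma log3_le : Real.log 3 ≤ 9/8 := by
  have := log_le_of_pow_le (x := 3) (k := 8) (m := 9) (by norm_num) (by norm_num)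
    (le_trans (by norm_num) (exp_ge 9))
  norm_num at this; linarith

lemma log5_le : Real.log 5 ≤ 13/8 := by
  have := log_le_of_pow_le (x := 5) (k := 8) (m := 13) (by norm_num) (by norm_num)
    (le_trans (by norm_num) (exp_ge 13))
  norm_num at this; linarith

lemma log7_le : Real.log 7 ≤ 2 := by
  have := log_le_of_pow_le (x := 7) (k := 1) (m := 2) (by norm_num) (by norm_num)
    (le_trans (by norm_num) (exp_ge 2))
  norm_num at this; linarith

lemma one_le_log3 : 1 ≤ Real.log 3 := by
  have h : Real.exp 1 ≤ 3 := le_trans Real.exp_one_lt_d9.le (by norm_num)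
  calc (1:ℝ) = Real.log (Real.exp 1) := (Real.log_exp 1).symm
    _ ≤ Real.log 3 := Real.log_le_log (Real.exp_pos 1) h


lemma factorial_le_pow' (n : ℕ) : (n.factorial : ℝ) ≤ ((n + 1 : ℝ) / 2) ^ n := by
  induction n with
  | zero => simp
  | succ n ih =>
    set x : ℝ := ((n + 1 : ℝ) / 2) ^ n with hxdef
    have hx : (0:ℝ) ≤ x := by positivity
    have hn1 : (0:ℝ) < (n:ℝ) + 1 := by positivity
    have hb : (1 : ℝ) + n * (1 / (n + 1)) ≤ (1 + 1 / ((n:ℝ) + 1)) ^ n :=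
      one_add_mul_le_pow (le_trans (by norm_num) (by positivity : (0:ℝ) ≤ 1/((n:ℝ)+1))) n
    have key : ((n:ℝ)+1) ≤ (((n:ℝ)+2)/2) * (1 + n * (1/(n+1))) := by
      have e : (1:ℝ) + n * (1/(n+1)) = (2*n+1)/(n+1) := by field_simp; ring
      rw [e, div_mul_div_comm, le_div_iff₀ (by positivity)]
      nlinarith
    have e2 : (1 + 1/((n:ℝ)+1)) * (((n:ℝ)+1)/2) = ((n:ℝ)+2)/2 := by field_simp; ring
    calc ((n+1).factorial : ℝ) = ((n:ℝ)+1) * n.factorial := by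
          push_cast [Nat.factorial_succ]; ring
      _ ≤ ((n:ℝ)+1) * x := by
          exact mul_le_mul_of_nonneg_left ih (by positivity)
      _ ≤ ((((n:ℝ)+2)/2) * (1 + n * (1/(n+1)))) * x := mul_le_mul_of_nonneg_right key hx
      _ ≤ ((((n:ℝ)+2)/2) * (1 + 1/((n:ℝ)+1)) ^ n) * x :=
          mul_le_mul_of_nonneg_right (mul_le_mul_of_nonneg_left hb (by positivity)) hx
      _ = (((n:ℝ)+2)/2) * ((1 + 1/((n:ℝ)+1)) * (((n:ℝ)+1)/2)) ^ n := by
          rw [mul_pow, hxdef]; ring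
      _ = ((((n+1:ℕ):ℝ) + 1)/2) ^ (n+1) := by rw [e2, ← pow_succ']; push_cast; ring_nf


lemma pow_div_dvd_factorial {p n : ℕ} (hp : p.Prime) : p ^ (n / p) ∣ n.factorial := by
  rcases Nat.eq_zero_or_pos (n / p) with h | h
  · simp [h]
  · have hpn : p ≤ n := by
      by_contra hc
      push_neg at hc
      rw [Nat.div_eq_of_lt hc] at h
      omega
    have hlog : 1 ≤ Nat.log p n := Nat.le_log_of_pow_le hp.one_lt (by simpa using hpn)
    rw [Nat.Prime.pow_dvd_factorial_iff hp (Nat.lt_succ_of_le le_rfl)]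
    calc n / p = n / p ^ 1 := by rw [pow_one]
      _ ≤ ∑ i ∈ Finset.Ico 1 (Nat.log p n + 1), n / p ^ i :=
        Finset.single_le_sum (f := fun i => n / p ^ i) (fun i _ => Nat.zero_le _)
          (Finset.mem_Ico.mpr ⟨le_rfl, Nat.lt_succ_of_le hlog⟩)

lemma log_factorial_eq (n : ℕ) :
    Real.log (n.factorial : ℝ)
      = ∑ p ∈ (n.factorial).primeFactors, ((n.factorial).factorization p : ℝ) * Real.log p := by
  conv_lhs => rw [← Nat.factorization_prod_pow_eq_self n.factorial_ne_zero]
  rw [Finsupp.prod, Nat.support_factorization]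
  push_cast
  rw [Real.log_prod]
  · exact Finset.sum_congr rfl fun p hp => by rw [Real.log_pow]
  · intro p hp
    have h2 := (Nat.prime_of_mem_primeFactors hp).pos
    positivity

lemma sum_floor_log_le (n : ℕ) :
    ∑ p ∈ (n+1).primesBelow, ((n / p : ℕ) : ℝ) * Real.log p ≤ Real.log (n.factorial : ℝ) := by
  rw [log_factorial_eq]
  have hsub : (n+1).primesBelow ⊆ (n.factorial).primeFactors := by
    intro p hp
    have hpp := Nat.prime_of_mem_primesBelow hp
    have hlt := Nat.lt_of_mem_primesBelow hp
    exact Nat.mem_primeFactors.mpr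
      ⟨hpp, Nat.dvd_factorial hpp.pos (Nat.lt_succ_iff.mp hlt), n.factorial_ne_zero⟩
  calc ∑ p ∈ (n+1).primesBelow, ((n / p : ℕ) : ℝ) * Real.log p
      ≤ ∑ p ∈ (n+1).primesBelow, ((n.factorial).factorization p : ℝ) * Real.log p := by
        refine Finset.sum_le_sum fun p hp => ?_
        have hpp := Nat.prime_of_mem_primesBelow hp
        have hfac : n / p ≤ (n.factorial).factorization p :=
          (Nat.Prime.pow_dvd_iff_le_factorization hpp n.factorial_ne_zero).mp
            (pow_div_dvd_factorial hpp)
        have hlog : (0:ℝ) ≤ Real.log p := Real.log_nonneg (by exact_mod_cast hpp.one_lt.le)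
        exact mul_le_mul_of_nonneg_right (by exact_mod_cast hfac) hlog
    _ ≤ ∑ p ∈ (n.factorial).primeFactors, ((n.factorial).factorization p : ℝ) * Real.log p := by
        refine Finset.sum_le_sum_of_subset_of_nonneg hsub fun p hp _ => ?_
        have hpp := Nat.prime_of_mem_primeFactors hp
        have hlog : (0:ℝ) ≤ Real.log p := Real.log_nonneg (by exact_mod_cast hpp.one_lt.le)
        positivity

lemma sum_log_primesBelow_le (n : ℕ) :
    ∑ p ∈ (n+1).primesBelow, Real.log p ≤ n * (2 * Real.log 2) := by
  have he : ∑ p ∈ (n+1).primesBelow, Real.log p = Real.log ((primorial n : ℕ) : ℝ) := by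
    rw [primorial, ← Real.log_prod (fun p hp => by
      have := (Nat.prime_of_mem_primesBelow hp).pos
      positivity)]
    rw [Nat.cast_prod]
    rfl
  rw [he]
  have h4 : ((primorial n : ℕ) : ℝ) ≤ ((4:ℝ)) ^ n := by
    exact_mod_cast primorial_le_4_pow n
  calc Real.log ((primorial n : ℕ) : ℝ) ≤ Real.log ((4:ℝ) ^ n) :=
        Real.log_le_log (by exact_mod_cast primorial_pos n) h4
    _ = n * Real.log 4 := by rw [Real.log_pow]
    _ = n * (2 * Real.log 2) := by
        rw [show (4:ℝ) = 2^2 by norm_num, Real.log_pow]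
        push_cast; ring



lemma mertens_bound {n : ℕ} (hn : 1 ≤ n) :
    ∑ p ∈ (n+1).primesBelow, Real.log p / p ≤ Real.log ((n:ℝ)+1) + Real.log 2 := by
  have hn0 : (0:ℝ) < n := by exact_mod_cast hn
  have key : (n:ℝ) * ∑ p ∈ (n+1).primesBelow, Real.log p / p
      ≤ (n:ℝ) * (Real.log ((n:ℝ)+1) + Real.log 2) := by
    rw [Finset.mul_sum]
    have hlogfac : Real.log (n.factorial : ℝ) ≤ (n:ℝ) * (Real.log ((n:ℝ)+1) - Real.log 2) := by
      calc Real.log (n.factorial : ℝ) ≤ Real.log (((n + 1 : ℝ) / 2) ^ n) :=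
            Real.log_le_log (by exact_mod_cast n.factorial_pos) (factorial_le_pow' n)
        _ = (n:ℝ) * Real.log ((n + 1 : ℝ) / 2) := by rw [Real.log_pow]
        _ = (n:ℝ) * (Real.log ((n:ℝ)+1) - Real.log 2) := by
            rw [Real.log_div (by positivity) (by norm_num)]
    calc ∑ p ∈ (n+1).primesBelow, (n:ℝ) * (Real.log p / p)
        ≤ ∑ p ∈ (n+1).primesBelow, (((n / p : ℕ) : ℝ) * Real.log p + Real.log p) := by
          refine Finset.sum_le_sum fun p hp => ?_
          have hpp := Nat.prime_of_mem_primesBelow hp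
          have hp0 : (0:ℝ) < p := by exact_mod_cast hpp.pos
          have hlog : (0:ℝ) ≤ Real.log p := Real.log_nonneg (by exact_mod_cast hpp.one_lt.le)
          have hdiv : (n:ℝ) / p ≤ ((n / p : ℕ) : ℝ) + 1 := by
            rw [div_le_iff₀ hp0]
            have h1 : n < (n / p + 1) * p := by
              have h3 := Nat.mod_lt n hpp.pos
              calc n = p * (n / p) + n % p := (Nat.div_add_mod n p).symm
                _ < p * (n / p) + p := by omega
                _ = (n / p + 1) * p := by ring
            calc (n:ℝ) ≤ ((n / p + 1) * p : ℕ) := by exact_mod_cast h1.le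
              _ = (((n / p : ℕ) : ℝ) + 1) * p := by push_cast; ring
          calc (n:ℝ) * (Real.log p / p) = ((n:ℝ) / p) * Real.log p := by ring
            _ ≤ (((n / p : ℕ) : ℝ) + 1) * Real.log p := mul_le_mul_of_nonneg_right hdiv hlog
            _ = ((n / p : ℕ) : ℝ) * Real.log p + Real.log p := by ring
      _ = (∑ p ∈ (n+1).primesBelow, ((n / p : ℕ) : ℝ) * Real.log p)
            + ∑ p ∈ (n+1).primesBelow, Real.log p := Finset.sum_add_distrib
      _ ≤ Real.log (n.factorial : ℝ) + (n:ℝ) * (2 * Real.log 2) :=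
          add_le_add (sum_floor_log_le n) (sum_log_primesBelow_le n)
      _ ≤ (n:ℝ) * (Real.log ((n:ℝ)+1) - Real.log 2) + (n:ℝ) * (2 * Real.log 2) :=
          add_le_add hlogfac le_rfl
      _ = (n:ℝ) * (Real.log ((n:ℝ)+1) + Real.log 2) := by ring
  exact le_of_mul_le_mul_left key hn0




theorem sum_log_div_self_le (N : ℕ) (hN : 2 < N) (hsf : Squarefree N) :
    ∑ p ∈ N.primeFactors, Real.log p / p ≤ Real.log (Real.log N) + 2 := by
  set L : ℝ := Real.log N with hLdef
  have hN3 : (3:ℝ) ≤ N := by exact_mod_cast hN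
  have hL3 : Real.log 3 ≤ L := Real.log_le_log (by norm_num) hN3
  have hL1 : (1:ℝ) ≤ L := le_trans one_le_log3 hL3
  have hL0 : (0:ℝ) < L := lt_of_lt_of_le one_pos hL1
  have hprime : ∀ p ∈ N.primeFactors, p.Prime := fun p hp => Nat.prime_of_mem_primeFactors hp
  have hlognn : ∀ p ∈ N.primeFactors, (0:ℝ) ≤ Real.log p := fun p hp =>
    Real.log_nonneg (by exact_mod_cast (hprime p hp).one_lt.le)
  have htermnn : ∀ p ∈ N.primeFactors, (0:ℝ) ≤ Real.log p / p := fun p hp => by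
    have := (hprime p hp).pos
    have := hlognn p hp
    positivity
  -- total log
  have hsum : ∑ p ∈ N.primeFactors, Real.log p = L := by
    rw [hLdef]
    have hcast : (N:ℝ) = ∏ p ∈ N.primeFactors, (p:ℝ) := by
      rw [← Nat.cast_prod, Nat.prod_primeFactors_of_squarefree hsf]
    rw [hcast, Real.log_prod]
    intro p hp
    exact_mod_cast (hprime p hp).pos.ne'
  -- split
  rw [← Finset.sum_filter_add_sum_filter_not N.primeFactors (fun (p : ℕ) => (p:ℝ) ≤ L)]
  -- large part ≤ 1
  have hlarge : ∑ p ∈ N.primeFactors.filter (fun (p : ℕ) => ¬ (p:ℝ) ≤ L), Real.log p / p ≤ 1 := by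
    calc ∑ p ∈ N.primeFactors.filter (fun (p : ℕ) => ¬ (p:ℝ) ≤ L), Real.log p / p
        ≤ ∑ p ∈ N.primeFactors.filter (fun (p : ℕ) => ¬ (p:ℝ) ≤ L), Real.log p / L := by
          refine Finset.sum_le_sum fun p hp => ?_
          have hpmem := Finset.mem_filter.mp hp
          have hLp : L ≤ (p:ℝ) := (not_le.mp hpmem.2).le
          have hlog := hlognn p hpmem.1
          gcongr
      _ = (∑ p ∈ N.primeFactors.filter (fun (p : ℕ) => ¬ (p:ℝ) ≤ L), Real.log p) / L := by
          rw [Finset.sum_div]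
      _ ≤ (∑ p ∈ N.primeFactors, Real.log p) / L := by
          refine (div_le_div_iff_of_pos_right hL0).mpr ?_
          exact Finset.sum_le_sum_of_subset_of_nonneg (Finset.filter_subset _ _)
            (fun p hp _ => hlognn p hp)
      _ = 1 := by rw [hsum]; field_simp
  -- small part
  set n : ℕ := ⌊L⌋₊ with hndef
  have hfloor_le : (n:ℝ) ≤ L := Nat.floor_le hL0.le
  have hsmall_sub : N.primeFactors.filter (fun (p : ℕ) => (p:ℝ) ≤ L) ⊆ (n+1).primesBelow := by
    intro p hp
    have hpmem := Finset.mem_filter.mp hp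
    have hple : p ≤ n := Nat.le_floor hpmem.2
    exact Nat.mem_primesBelow.mpr ⟨Nat.lt_succ_of_le hple, hprime p hpmem.1⟩
  by_cases hc : (10:ℝ) ≤ L
  · -- big case
    have hn10 : 10 ≤ n := Nat.le_floor hc
    have hsmall : ∑ p ∈ N.primeFactors.filter (fun (p : ℕ) => (p:ℝ) ≤ L), Real.log p / p
        ≤ Real.log ((n:ℝ)+1) + Real.log 2 := by
      refine le_trans ?_ (mertens_bound (by omega))
      refine Finset.sum_le_sum_of_subset_of_nonneg hsmall_sub fun p hp _ => ?_
      have hpp := Nat.prime_of_mem_primesBelow hp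
      have h0 := hpp.pos
      have : (0:ℝ) ≤ Real.log p := Real.log_nonneg (by exact_mod_cast hpp.one_lt.le)
      positivity
    have hlogn1 : Real.log ((n:ℝ)+1) ≤ Real.log L + 1/L := by
      have h1 : Real.log ((n:ℝ)+1) ≤ Real.log (L+1) :=
        Real.log_le_log (by positivity) (by linarith)
      have h2 : Real.log ((L+1)/L) ≤ (L+1)/L - 1 := Real.log_le_sub_one_of_pos (by positivity)
      have h3 : Real.log ((L+1)/L) = Real.log (L+1) - Real.log L :=
        Real.log_div (by positivity) (by positivity)
      have h4 : (L+1)/L - 1 = 1/L := by field_simp; ring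
      linarith
    have hLinv : 1/L ≤ 1/10 := by
      rw [div_le_div_iff₀ hL0 (by norm_num)]; linarith
    linarith [log2_le]
  · -- small case
    push_neg at hc
    by_cases hc3 : (3:ℝ) ≤ L
    · have hsub4 : N.primeFactors.filter (fun (p : ℕ) => (p:ℝ) ≤ L) ⊆ ({2,3,5,7} : Finset ℕ) := by
        intro p hp
        have hpmem := Finset.mem_filter.mp hp
        have hpp := hprime p hpmem.1
        have hlt : p < 10 := by
          by_contra hcc
          push_neg at hcc
          have : (10:ℝ) ≤ (p:ℝ) := by exact_mod_cast hcc
          linarith [hpmem.2]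
        have h2 := hpp.two_le
        interval_cases p <;> revert hpp <;> decide
      have hsmall : ∑ p ∈ N.primeFactors.filter (fun (p : ℕ) => (p:ℝ) ≤ L), Real.log p / p
          ≤ Real.log 2/2 + Real.log 3/3 + Real.log 5/5 + Real.log 7/7 := by
        refine le_trans (Finset.sum_le_sum_of_subset_of_nonneg hsub4 ?_) ?_
        · intro p hp _
          have hpp : p.Prime := by fin_cases hp <;> norm_num
          have h0 := hpp.pos
          have : (0:ℝ) ≤ Real.log p := Real.log_nonneg (by exact_mod_cast hpp.one_lt.le)
          positivity
        · apply le_of_eq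
          norm_num [Finset.sum_insert, Finset.mem_insert]
          ring
      have hlogL : (1:ℝ) ≤ Real.log L := le_trans one_le_log3 (Real.log_le_log (by norm_num) hc3)
      linarith [log2_le, log3_le, log5_le, log7_le]
    · push_neg at hc3
      have hsub2 : N.primeFactors.filter (fun (p : ℕ) => (p:ℝ) ≤ L) ⊆ ({2} : Finset ℕ) := by
        intro p hp
        have hpmem := Finset.mem_filter.mp hp
        have hpp := hprime p hpmem.1
        have hlt : p < 3 := by
          by_contra hcc
          push_neg at hcc
          have : (3:ℝ) ≤ (p:ℝ) := by exact_mod_cast hcc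
          linarith [hpmem.2]
        have h2 := hpp.two_le
        interval_cases p <;> simp
      have hsmall : ∑ p ∈ N.primeFactors.filter (fun (p : ℕ) => (p:ℝ) ≤ L), Real.log p / p
          ≤ Real.log 2/2 := by
        refine le_trans (Finset.sum_le_sum_of_subset_of_nonneg hsub2 ?_) ?_
        · intro p hp _
          have : p = 2 := Finset.mem_singleton.mp hp
          subst this
          have : (0:ℝ) ≤ Real.log 2 := Real.log_nonneg (by norm_num)
          positivity
        · apply le_of_eq
          norm_num
      have hlogL : (0:ℝ) ≤ Real.log L := Real.log_nonneg hL1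
      linarith [log2_le]
end

section
/- For any integer Π > 1 and any positive integer l ≤ Π, the sum over prime divisors p of Π of (log p)/p is at most log l + (1/l)·log Π. -/
theorem sum_log_div_self_le_log_add (N l : ℕ) (hN : 1 < N) (hl : 0 < l) (hlN : l ≤ N) :
    ∑ p ∈ N.primeFactors, Real.log p / p ≤
      Real.log l + (1 / (l : ℝ)) * Real.log N := by
  have hl0 : (0:ℝ) < l := by exact_mod_cast hl
  set T : Finset ℕ := (Finset.range (l+1)).filter Nat.Prime with hTdef
  have hmemT : ∀ p : ℕ, p ∈ T ↔ p ≤ l ∧ p.Prime := by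
    intro p
    simp [hTdef, Finset.mem_filter, Finset.mem_range, Nat.lt_succ_iff]
  set f : ℕ → ℝ := fun p => Real.log p * (1/(p:ℝ) - 1/(l:ℝ)) with hfdef
  have hsplit : ∀ p ∈ N.primeFactors, Real.log p / p = f p + 1/(l:ℝ) * Real.log p := by
    intro p _
    simp only [hfdef]
    rw [div_eq_mul_inv, one_div, one_div]
    ring
  rw [Finset.sum_congr rfl hsplit, Finset.sum_add_distrib]
  -- second part
  have part2 : ∑ p ∈ N.primeFactors, 1/(l:ℝ) * Real.log p ≤ 1/(l:ℝ) * Real.log N := by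
    rw [← Finset.mul_sum]
    refine mul_le_mul_of_nonneg_left ?_ (by positivity)
    have h1 : ∑ p ∈ N.primeFactors, Real.log p = Real.log (∏ p ∈ N.primeFactors, (p:ℝ)) := by
      rw [Real.log_prod]
      intro p hp
      exact_mod_cast (Nat.prime_of_mem_primeFactors hp).pos.ne'
    rw [h1, ← Nat.cast_prod]
    have hpos : 0 < ∏ p ∈ N.primeFactors, p :=
      Finset.prod_pos fun p hp => (Nat.prime_of_mem_primeFactors hp).pos
    have hle : ∏ p ∈ N.primeFactors, p ≤ N :=
      Nat.le_of_dvd (by omega) (Nat.prod_primeFactors_dvd N)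
    exact Real.log_le_log (by exact_mod_cast hpos) (by exact_mod_cast hle)
  -- first part
  have hf_nonneg : ∀ p ∈ T, 0 ≤ f p := by
    intro p hp
    obtain ⟨hpl, hpp⟩ := (hmemT p).1 hp
    refine mul_nonneg (Real.log_natCast_nonneg p) ?_
    rw [sub_nonneg]
    apply one_div_le_one_div_of_le (by exact_mod_cast hpp.pos)
    exact_mod_cast hpl
  have h1 : ∑ p ∈ N.primeFactors, f p ≤ ∑ p ∈ N.primeFactors.filter (· ≤ l), f p := by
    rw [← Finset.sum_filter_add_sum_filter_not N.primeFactors (· ≤ l) f]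
    have hneg : ∑ p ∈ N.primeFactors.filter (fun p => ¬ p ≤ l), f p ≤ 0 := by
      refine Finset.sum_nonpos fun p hp => ?_
      rw [Finset.mem_filter] at hp
      refine mul_nonpos_of_nonneg_of_nonpos (Real.log_natCast_nonneg p) ?_
      rw [sub_nonpos]
      apply one_div_le_one_div_of_le hl0
      exact_mod_cast le_of_not_ge hp.2
    linarith
  have h2 : ∑ p ∈ N.primeFactors.filter (· ≤ l), f p ≤ ∑ p ∈ T, f p := by
    refine Finset.sum_le_sum_of_subset_of_nonneg ?_ (fun p hp _ => hf_nonneg p hp)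
    intro p hp
    rw [Finset.mem_filter] at hp
    exact (hmemT p).2 ⟨hp.2, Nat.prime_of_mem_primeFactors hp.1⟩
  -- Legendre-type bound on T
  have hfac0 : (Nat.factorial l) ≠ 0 := Nat.factorial_ne_zero l
  have hLeg : ∀ p ∈ T, l / p ≤ ((Nat.factorial l)).factorization p := by
    intro p hp
    obtain ⟨hpl, hpp⟩ := (hmemT p).1 hp
    have hdvd : p ^ (l / p) ∣ (Nat.factorial l) := by
      rw [Nat.Prime.pow_dvd_factorial_iff hpp (Nat.lt_succ_self (Nat.log p l))]
      have h1b : (1:ℕ) ∈ Finset.Ico 1 (Nat.log p l + 1) := by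
        simp [Nat.lt_succ_iff, Nat.log_pos hpp.one_lt hpl]
      calc l / p = l / p ^ 1 := by rw [pow_one]
        _ ≤ ∑ i ∈ Finset.Ico 1 (Nat.log p l + 1), l / p ^ i :=
          Finset.single_le_sum (f := fun i => l / p ^ i) (fun i _ => Nat.zero_le _) h1b
    exact (Nat.Prime.pow_dvd_iff_le_factorization hpp hfac0).1 hdvd
  have hsupp : T ⊆ ((Nat.factorial l)).primeFactors := by
    intro p hp
    obtain ⟨hpl, hpp⟩ := (hmemT p).1 hp
    exact Nat.mem_primeFactors.2 ⟨hpp, Nat.dvd_factorial hpp.pos hpl, hfac0⟩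
  have hlogfac : Real.log ((Nat.factorial l)) =
      ∑ p ∈ ((Nat.factorial l)).primeFactors, (((Nat.factorial l)).factorization p : ℝ) * Real.log p := by
    conv_lhs => rw [← Nat.factorization_prod_pow_eq_self hfac0]
    rw [Finsupp.prod, Nat.support_factorization, Nat.cast_prod, Real.log_prod]
    · refine Finset.sum_congr rfl fun p hp => ?_
      rw [Nat.cast_pow, Real.log_pow]
    · intro p hp
      have hpp := Nat.prime_of_mem_primeFactors hp
      have : (p:ℝ) ≠ 0 := by exact_mod_cast hpp.pos.ne'
      push_cast
      exact pow_ne_zero _ this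
  have h4 : ∑ p ∈ T, ((l / p : ℕ):ℝ) * Real.log p ≤ Real.log ((Nat.factorial l)) := by
    rw [hlogfac]
    calc ∑ p ∈ T, ((l / p : ℕ):ℝ) * Real.log p
        ≤ ∑ p ∈ T, (((Nat.factorial l)).factorization p : ℝ) * Real.log p := by
          refine Finset.sum_le_sum fun p hp => ?_
          refine mul_le_mul_of_nonneg_right ?_ (Real.log_natCast_nonneg p)
          exact_mod_cast hLeg p hp
      _ ≤ ∑ p ∈ ((Nat.factorial l)).primeFactors, (((Nat.factorial l)).factorization p : ℝ) * Real.log p := by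
          refine Finset.sum_le_sum_of_subset_of_nonneg hsupp fun p _ _ => ?_
          exact mul_nonneg (by positivity) (Real.log_natCast_nonneg p)
  have h5 : Real.log ((Nat.factorial l)) ≤ l * Real.log l := by
    have : Real.log ((Nat.factorial l)) ≤ Real.log ((l:ℝ)^l) := by
      refine Real.log_le_log (by exact_mod_cast Nat.factorial_pos l) ?_
      exact_mod_cast Nat.factorial_le_pow l
    rwa [Real.log_pow] at this
  have h3 : ∑ p ∈ T, f p ≤ Real.log l := by
    have hstep : ∑ p ∈ T, f p ≤ ∑ p ∈ T, ((l / p : ℕ):ℝ) * Real.log p / l := by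
      refine Finset.sum_le_sum fun p hp => ?_
      obtain ⟨hpl, hpp⟩ := (hmemT p).1 hp
      have hp0 : (0:ℝ) < p := by exact_mod_cast hpp.pos
      have hfloor : (l:ℝ)/p - 1 ≤ ((l / p : ℕ):ℝ) := by
        have : l < p * (l / p) + p := by
          have := Nat.div_add_mod l p
          have := Nat.mod_lt l hpp.pos
          omega
        have hcast : (l:ℝ) < p * ((l / p : ℕ):ℝ) + p := by exact_mod_cast this
        rw [div_sub_one hp0.ne', div_le_iff₀ hp0]
        nlinarith
      simp only [hfdef]
      rw [mul_comm ((l / p : ℕ):ℝ) (Real.log p), mul_div_assoc]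
      refine mul_le_mul_of_nonneg_left ?_ (Real.log_natCast_nonneg p)
      rw [le_div_iff₀ hl0]
      have heq : (1/(p:ℝ) - 1/l) * l = (l:ℝ)/p - 1 := by
        field_simp
      rw [heq]
      exact hfloor
    calc ∑ p ∈ T, f p ≤ ∑ p ∈ T, ((l / p : ℕ):ℝ) * Real.log p / l := hstep
      _ = (∑ p ∈ T, ((l / p : ℕ):ℝ) * Real.log p) / l := by rw [← Finset.sum_div]
      _ ≤ Real.log ((Nat.factorial l)) / l := by apply div_le_div_of_nonneg_right h4 hl0.le
      _ ≤ (l * Real.log l) / l := by apply div_le_div_of_nonneg_right h5 hl0.le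
      _ = Real.log l := by field_simp
  linarith [h1, h2, h3, part2]
end
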